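/- Let a, c ∈ ℝ with 0 < a ≤ 1 and c < 0, and fix t₀ > -c/a. Define ĝ(t) = ∫_{t₀}^{t} √(τ²/(a τ + c)² - 1) dτ for t > -c/a. Then ĝ(t) → -∞ as t → (-c/a)⁺ and ĝ(t) → +∞ as t → +∞. -/

import Mathlib

open Filter Topology

private lemma funnel_aux_sq (s b y : ℝ) : (s / b * y⁻¹) ^ 2 = s ^ 2 / (b * y) ^ 2 := by
  ring

/-- For `0 < a ≤ 1`, `c < 0`, `t₀ > -c/a` and
`ĝ(t) = ∫_{t₀}^{t} √(τ²/(a τ + c)² - 1) dτ`, one has `ĝ(t) → -∞` as `t → (-c/a)⁺` and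
`ĝ(t) → +∞` as `t → +∞`. -/
theorem funnel_ricci_height_limits
    (a c t₀ : ℝ) (ha0 : 0 < a) (ha1 : a ≤ 1) (hc : c < 0) (ht₀ : -c / a < t₀)
    (g : ℝ → ℝ)
    (hg : ∀ t : ℝ, g t = ∫ τ in t₀..t, Real.sqrt (τ ^ 2 / (a * τ + c) ^ 2 - 1)) :
    Tendsto g (𝓝[>] (-c / a)) atBot ∧ Tendsto g atTop atTop := by
  set r : ℝ := -c / a with hr
  have hr0 : 0 < r := div_pos (neg_pos.2 hc) ha0
  have har : a * r + c = 0 := by rw [hr, mul_div_assoc', mul_div_cancel_left₀ _ ha0.ne']; ring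
  have hpos : ∀ τ : ℝ, r < τ → 0 < a * τ + c := by
    intro τ hτ
    have h1 : a * τ + c = a * (τ - r) + (a * r + c) := by ring
    rw [h1, har, add_zero]
    exact mul_pos ha0 (by linarith)
  set h : ℝ → ℝ := fun τ => Real.sqrt (τ ^ 2 / (a * τ + c) ^ 2 - 1) with hh
  -- basic estimates valid for all τ > r
  have hc2 : (0:ℝ) < -c := neg_pos.2 hc
  have hkey : ∀ τ : ℝ, r < τ →
      (a * τ + c ≤ τ ∧ -c * τ ≤ τ ^ 2 - (a * τ + c) ^ 2) := by
    intro τ hτ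
    have hτ0 : 0 < τ := lt_trans hr0 hτ
    have hu : 0 < a * τ + c := hpos τ hτ
    have h1 : -c ≤ τ - (a * τ + c) := by
      nlinarith [mul_nonneg (sub_nonneg.2 ha1) hτ0.le]
    have huτ : a * τ + c ≤ τ := by linarith
    have h3 : -c * τ ≤ τ ^ 2 - (a * τ + c) ^ 2 := by
      nlinarith [mul_le_mul_of_nonneg_right h1
        (by positivity : (0:ℝ) ≤ τ + (a * τ + c)), mul_pos hc2 hu]
    exact ⟨huτ, h3⟩
  -- integrability of h on intervals avoiding r
  have hint : ∀ s t : ℝ, (∀ τ ∈ Set.uIcc s t, r < τ) →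
      IntervalIntegrable h MeasureTheory.volume s t := by
    intro s t hst
    apply ContinuousOn.intervalIntegrable
    apply ContinuousOn.sqrt
    apply ContinuousOn.sub _ continuousOn_const
    exact ContinuousOn.div ((continuous_pow 2).continuousOn)
      (((continuous_const.mul continuous_id).add continuous_const).pow 2).continuousOn
      (fun τ hτ => pow_ne_zero 2 (ne_of_gt (hpos τ (hst τ hτ))))
  have ht₀r : r < t₀ := ht₀
  constructor
  · -- limit at (-c/a)⁺
    set K : ℝ := Real.sqrt (c ^ 2 / a) / a with hK
    have hc2' : (0:ℝ) < c ^ 2 := by nlinarith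
    have hK0 : 0 < K := div_pos (Real.sqrt_pos.2 (div_pos hc2' ha0)) ha0
    -- pointwise bound near r
    have hbd : ∀ τ : ℝ, r < τ → K * (τ - r)⁻¹ ≤ h τ := by
      intro τ hτ
      have hτr : 0 < τ - r := by linarith
      have hu : 0 < a * τ + c := hpos τ hτ
      have hτ0 : 0 < τ := lt_trans hr0 hτ
      obtain ⟨huτ, h3⟩ := hkey τ hτ
      have hx0 : 0 ≤ K * (τ - r)⁻¹ := by positivity
      have hy0 : 0 ≤ τ ^ 2 / (a * τ + c) ^ 2 - 1 := by
        rw [sub_nonneg, le_div_iff₀ (by positivity), one_mul]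
        nlinarith
      rw [hh]
      rw [Real.le_sqrt hx0 hy0]
      have huτ' : a * τ + c = a * (τ - r) := by
        have h1 : a * τ + c = a * (τ - r) + (a * r + c) := by ring
        rw [h1, har, add_zero]
      have hKsq : (K * (τ - r)⁻¹) ^ 2
          = Real.sqrt (c ^ 2 / a) ^ 2 / (a * (τ - r)) ^ 2 := by
        rw [hK]; exact funnel_aux_sq _ _ _
      rw [hKsq, Real.sq_sqrt (by positivity : (0:ℝ) ≤ c ^ 2 / a), ← huτ']
      have heq : τ ^ 2 / (a * τ + c) ^ 2 - 1
          = (τ ^ 2 - (a * τ + c) ^ 2) / (a * τ + c) ^ 2 := by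
        rw [sub_div, div_self (pow_ne_zero 2 hu.ne')]
      rw [heq]
      apply div_le_div_of_nonneg_right ?_ (by positivity)
      · -- c^2/a ≤ τ^2 - (aτ+c)^2
        rw [div_le_iff₀ ha0]
        have h4 : -c ≤ a * τ := by linarith
        nlinarith [mul_le_mul_of_nonneg_left h3 ha0.le,
          mul_le_mul_of_nonneg_left h4 hc2.le]
    -- integral bound
    have hmain : ∀ t : ℝ, t ∈ Set.Ioo r t₀ →
        g t ≤ K * Real.log (t - r) - K * Real.log (t₀ - r) := by
      intro t ht
      have htr : 0 < t - r := by linarith [ht.1]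
      have ht₀r' : 0 < t₀ - r := by linarith
      have hsub : ∀ τ ∈ Set.uIcc t t₀, r < τ := by
        intro τ hτ
        rw [Set.uIcc_of_le ht.2.le] at hτ
        linarith [hτ.1, ht.1]
      have hint1 : IntervalIntegrable (fun τ => K * (τ - r)⁻¹)
          MeasureTheory.volume t t₀ := by
        apply ContinuousOn.intervalIntegrable
        apply ContinuousOn.mul continuousOn_const
        apply ContinuousOn.inv₀ (by fun_prop)
        intro τ hτ
        exact sub_ne_zero.2 (ne_of_gt (hsub τ hτ))
      have hint2 := hint t t₀ hsub
      have hmono := intervalIntegral.integral_mono_on ht.2.le hint1 hint2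
        (fun τ hτ => hbd τ (by linarith [hτ.1, ht.1]))
      have hcomp : (∫ τ in t..t₀, K * (τ - r)⁻¹)
          = K * (Real.log (t₀ - r) - Real.log (t - r)) := by
        rw [intervalIntegral.integral_const_mul]
        have hcs : (∫ τ in t..t₀, (τ - r)⁻¹) = ∫ x in t - r..t₀ - r, x⁻¹ :=
          intervalIntegral.integral_comp_sub_right (fun x => x⁻¹) r
        rw [hcs, integral_inv]
        · rw [Real.log_div (ne_of_gt ht₀r') (ne_of_gt htr)]
        · intro hmem
          rw [Set.uIcc_of_le (by linarith [ht.2] : t - r ≤ t₀ - r)] at hmem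
          linarith [hmem.1]
      have hgt : g t = -(∫ τ in t..t₀, h τ) := by
        rw [hg t, ← intervalIntegral.integral_symm]
      rw [hcomp] at hmono
      rw [hgt]
      linarith
    apply tendsto_atBot_mono' (𝓝[>] r)
    · filter_upwards [Ioo_mem_nhdsGT_of_mem (Set.mem_Ico.2 ⟨le_refl r, ht₀r⟩)] with t ht
      exact hmain t ht
    · -- K * log(t - r) - K * log(t₀ - r) → -∞
      apply tendsto_atBot_add_const_right
      apply Tendsto.const_mul_atBot hK0
      have hsub : Tendsto (fun t : ℝ => t - r) (𝓝[>] r) (𝓝[>] 0) := by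
        apply tendsto_nhdsWithin_of_tendsto_nhds_of_eventually_within
        · have hcts : Tendsto (fun t : ℝ => t - r) (𝓝 r) (𝓝 (r - r)) :=
            (continuous_id.sub continuous_const).tendsto r
          rw [sub_self] at hcts
          exact hcts.mono_left nhdsWithin_le_nhds
        · filter_upwards [self_mem_nhdsWithin] with t ht
          exact sub_pos.2 (Set.mem_Ioi.1 ht)
      exact Real.tendsto_log_nhdsGT_zero.comp hsub
  · -- limit at +∞
    have hsc : 0 < Real.sqrt (-c) := Real.sqrt_pos.2 hc2
    have hbd : ∀ τ : ℝ, t₀ ≤ τ → Real.sqrt (-c) * τ ^ (-(1/2) : ℝ) ≤ h τ := by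
      intro τ hτ
      have hτr : r < τ := lt_of_lt_of_le ht₀r hτ
      have hτ0 : 0 < τ := lt_trans hr0 hτr
      have hu : 0 < a * τ + c := hpos τ hτr
      obtain ⟨huτ, h3⟩ := hkey τ hτr
      have hx0 : 0 ≤ Real.sqrt (-c) * τ ^ (-(1/2) : ℝ) := by positivity
      have hy0 : 0 ≤ τ ^ 2 / (a * τ + c) ^ 2 - 1 := by
        rw [sub_nonneg, le_div_iff₀ (by positivity), one_mul]
        nlinarith
      rw [hh, Real.le_sqrt hx0 hy0]
      have hxsq : (Real.sqrt (-c) * τ ^ (-(1/2) : ℝ)) ^ 2 = (-c) / τ := by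
        rw [mul_pow, Real.sq_sqrt (by linarith : (0:ℝ) ≤ -c),
          ← Real.rpow_natCast (τ ^ (-(1/2) : ℝ)) 2, ← Real.rpow_mul hτ0.le]
        norm_num
        rw [Real.rpow_neg_one]
        ring
      rw [hxsq]
      have heq : τ ^ 2 / (a * τ + c) ^ 2 - 1
          = (τ ^ 2 - (a * τ + c) ^ 2) / (a * τ + c) ^ 2 := by rw [sub_div, div_self (pow_ne_zero 2 hu.ne')]
      rw [heq, div_le_div_iff₀ hτ0 (by positivity)]
      have h2 : (a * τ + c) ^ 2 ≤ τ ^ 2 := by nlinarith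
      nlinarith [mul_le_mul_of_nonneg_right h3 hτ0.le,
        mul_le_mul_of_nonneg_left h2 hc2.le]
    have hmain : ∀ t : ℝ, t₀ ≤ t →
        Real.sqrt (-c) * ((t ^ ((1:ℝ)/2) - t₀ ^ ((1:ℝ)/2)) / (1/2)) ≤ g t := by
      intro t ht
      have hsub : ∀ τ ∈ Set.uIcc t₀ t, r < τ := by
        intro τ hτ
        rw [Set.uIcc_of_le ht] at hτ
        linarith [hτ.1]
      have hint2 := hint t₀ t hsub
      have hint1 : IntervalIntegrable (fun τ => Real.sqrt (-c) * τ ^ (-(1/2) : ℝ))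
          MeasureTheory.volume t₀ t := by
        apply ContinuousOn.intervalIntegrable
        apply ContinuousOn.mul continuousOn_const
        apply ContinuousOn.rpow_const continuousOn_id
        intro τ hτ
        exact Or.inl (ne_of_gt (lt_trans hr0 (hsub τ hτ)))
      have hmono := intervalIntegral.integral_mono_on ht hint1 hint2
        (fun τ hτ => hbd τ hτ.1)
      have hcomp : (∫ τ in t₀..t, Real.sqrt (-c) * τ ^ (-(1/2) : ℝ))
          = Real.sqrt (-c) * ((t ^ ((1:ℝ)/2) - t₀ ^ ((1:ℝ)/2)) / (1/2)) := by
        rw [intervalIntegral.integral_const_mul,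
          integral_rpow (Or.inl (by norm_num : (-1:ℝ) < -(1/2)))]
        norm_num
      rw [hg t]
      calc Real.sqrt (-c) * ((t ^ ((1:ℝ)/2) - t₀ ^ ((1:ℝ)/2)) / (1/2))
          = ∫ τ in t₀..t, Real.sqrt (-c) * τ ^ (-(1/2) : ℝ) := hcomp.symm
        _ ≤ ∫ τ in t₀..t, h τ := hmono
    apply tendsto_atTop_mono' atTop
    · filter_upwards [eventually_ge_atTop t₀] with t ht
      exact hmain t ht
    · apply Tendsto.const_mul_atTop hsc
      apply Tendsto.atTop_div_const (by norm_num : (0:ℝ) < 1/2)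
      apply tendsto_atTop_add_const_right
      exact tendsto_rpow_atTop (by norm_num)
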